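/- Let G be a finite group whose every nontrivial irreducible complex representation has dimension at least D (G is D-quasirandom). Then every proper subgroup H of G satisfies |H| ≤ |G| / D. -/
import Mathlib

open Module

def qrPermRep (G : Type) [Group G] (X : Type) [MulAction G X] :
    Representation ℂ G (X → ℂ) where
  toFun g :=
    { toFun := fun f x => f (g⁻¹ • x)
      map_add' := fun f₁ f₂ => rfl
      map_smul' := fun c f => rfl }
  map_one' := by ext f x; simp
  map_mul' g h := by ext f x; simp [mul_smul]

lemma qrPermRep_apply {G : Type} [Group G] {X : Type} [MulAction G X]
    (g : G) (f : X → ℂ) (x : X) : qrPermRep G X g f x = f (g⁻¹ • x) := rfl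

noncomputable def qrSumMap (X : Type) [Fintype X] : (X → ℂ) →ₗ[ℂ] ℂ where
  toFun f := ∑ x, f x
  map_add' f g := by simp [Finset.sum_add_distrib]
  map_smul' c f := by simp [Finset.mul_sum]

def qrResRep {G V : Type} [Group G] [AddCommGroup V] [Module ℂ V]
    (ρ : Representation ℂ G V) (W : Submodule ℂ V)
    (hW : ∀ g : G, ∀ v ∈ W, ρ g v ∈ W) : Representation ℂ G W where
  toFun g := (ρ g).restrict (hW g)
  map_one' := by ext v; simp [LinearMap.restrict_apply]
  map_mul' g h := by ext v; simp [LinearMap.restrict_apply]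

lemma qrResRep_coe {G V : Type} [Group G] [AddCommGroup V] [Module ℂ V]
    (ρ : Representation ℂ G V) (W : Submodule ℂ V)
    (hW : ∀ g : G, ∀ v ∈ W, ρ g v ∈ W) (g : G) (v : W) :
    (qrResRep ρ W hW g v : V) = ρ g (v : V) := rfl

/-- If every nontrivial irreducible complex representation of a finite
group `G` has dimension at least `D` (`G` is `D`-quasirandom), then every proper
subgroup `H < G` satisfies `|H| ≤ |G| / D`. -/
theorem quasirandom_proper_subgroup_bound
    {G : Type} [Group G] [Fintype G] (D : ℕ) (hD : 0 < D)
    (hquasi : ∀ (V : Type) [AddCommGroup V] [Module ℂ V] [FiniteDimensional ℂ V]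
      (ρ : Representation ℂ G V),
        (∀ W : Submodule ℂ V, (∀ (g : G) (v : V), v ∈ W → ρ g v ∈ W) → W = ⊥ ∨ W = ⊤) →
        (∃ (g : G) (v : V), ρ g v ≠ v) →
        D ≤ Module.finrank ℂ V) :
    ∀ H : Subgroup G, H ≠ ⊤ → (Nat.card H : ℝ) ≤ (Nat.card G : ℝ) / (D : ℝ) := by
  classical
  intro H hH
  have : Fintype (G ⧸ H) := Fintype.ofFinite _
  let ρ := qrPermRep G (G ⧸ H)
  set V₀ : Submodule ℂ ((G ⧸ H) → ℂ) := LinearMap.ker (qrSumMap (G ⧸ H)) with hV₀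
  -- invariance of V₀
  have hinv : ∀ g : G, ∀ f ∈ V₀, ρ g f ∈ V₀ := by
    intro g f hf
    simp only [hV₀, LinearMap.mem_ker, qrSumMap, LinearMap.coe_mk, AddHom.coe_mk] at hf ⊢
    have h2 : ∑ x : G ⧸ H, (ρ g f) x = ∑ x : G ⧸ H, f x := by
      simp only [ρ, qrPermRep_apply]
      exact Equiv.sum_comp (MulAction.toPerm g⁻¹) f
    rw [h2]; exact hf
  -- V₀ ≠ ⊥
  have hV₀ne : V₀ ≠ ⊥ := by
    obtain ⟨g₀, hg₀⟩ : ∃ g₀ : G, g₀ ∉ H := by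
      by_contra hc
      push_neg at hc
      exact hH (Subgroup.eq_top_iff' H |>.2 hc)
    have hxy : ((1 : G) : G ⧸ H) ≠ (g₀ : G ⧸ H) := by
      intro h
      have h2 := QuotientGroup.eq.1 h
      exact hg₀ (by simpa using h2)
    set f : (G ⧸ H) → ℂ := Pi.single ((1:G) : G ⧸ H) 1 - Pi.single (g₀ : G ⧸ H) 1 with hf
    have hfmem : f ∈ V₀ := by
      simp only [hV₀, LinearMap.mem_ker, qrSumMap, LinearMap.coe_mk, AddHom.coe_mk, hf]
      simp [Finset.sum_sub_distrib]
    have hfne : f ≠ 0 := by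
      intro h
      have := congrFun h ((1:G) : G ⧸ H)
      simp [hf, Pi.single_apply, hxy] at this
    exact (Submodule.ne_bot_iff V₀ |>.2 ⟨f, hfmem, hfne⟩)
  -- choose a minimal nonzero invariant submodule of V₀
  let P : Submodule ℂ ((G ⧸ H) → ℂ) → Prop :=
    fun W => W ≤ V₀ ∧ (∀ g : G, ∀ v ∈ W, ρ g v ∈ W) ∧ W ≠ ⊥
  have hex : ∃ n : ℕ, ∃ W, P W ∧ finrank ℂ W = n :=
    ⟨finrank ℂ V₀, V₀, ⟨le_refl _, hinv, hV₀ne⟩, rfl⟩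
  obtain ⟨W, ⟨hWle, hWinv, hWne⟩, hWrank⟩ := Nat.find_spec hex
  have hmin : ∀ W', P W' → finrank ℂ W ≤ finrank ℂ W' := by
    intro W' hW'
    rw [hWrank]
    by_contra hc
    push_neg at hc
    exact Nat.find_min hex hc ⟨W', hW', rfl⟩
  -- the restricted representation
  let ρ' := qrResRep ρ W hWinv
  -- irreducibility
  have hirr : ∀ U : Submodule ℂ W, (∀ (g : G) (v : W), v ∈ U → ρ' g v ∈ U) → U = ⊥ ∨ U = ⊤ := by
    intro U hU
    by_cases hUbot : U = ⊥
    · exact Or.inl hUbot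
    right
    let U' := U.map W.subtype
    have hU'le : U' ≤ W := Submodule.map_subtype_le W U
    have hU'inv : ∀ g : G, ∀ v ∈ U', ρ g v ∈ U' := by
      rintro g v ⟨u, hu, rfl⟩
      exact ⟨ρ' g u, hU g u hu, (qrResRep_coe ρ W hWinv g u).symm⟩
    have hU'ne : U' ≠ ⊥ := by
      intro h
      apply hUbot
      rw [Submodule.eq_bot_iff] at h ⊢
      intro u hu
      have : (u : (G ⧸ H) → ℂ) = 0 := h u ⟨u, hu, rfl⟩
      exact Subtype.ext this
    have hPU' : P U' := ⟨le_trans hU'le hWle, hU'inv, hU'ne⟩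
    have h1 : finrank ℂ W ≤ finrank ℂ U' := hmin U' hPU'
    have h2 : U' = W := Submodule.eq_of_le_of_finrank_le hU'le h1
    have h3 : U.map W.subtype = (⊤ : Submodule ℂ W).map W.subtype := by
      rw [Submodule.map_subtype_top]; exact h2
    exact Submodule.map_injective_of_injective W.injective_subtype h3
  -- nontriviality
  have hnt : ∃ (g : G) (v : W), ρ' g v ≠ v := by
    by_contra hc
    push_neg at hc
    obtain ⟨w, hwW, hwne⟩ := (Submodule.ne_bot_iff W).1 hWne
    -- w is fixed by all ρ g
    have hfix : ∀ g : G, ρ g w = w := by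
      intro g
      have := hc g ⟨w, hwW⟩
      have := congrArg (Subtype.val) this
      rwa [qrResRep_coe] at this
    -- w is constant
    have hconst : ∀ x y : G ⧸ H, w x = w y := by
      intro x y
      obtain ⟨g, hg⟩ := MulAction.exists_smul_eq G x y
      have h5 := congrFun (hfix g) y
      rw [qrPermRep_apply, ← hg, inv_smul_smul] at h5
      rw [hg] at h5
      exact h5
    -- but w sums to zero
    have hwV₀ : w ∈ V₀ := hWle hwW
    simp only [hV₀, LinearMap.mem_ker, qrSumMap, LinearMap.coe_mk, AddHom.coe_mk] at hwV₀
    have x₀ : G ⧸ H := ((1:G) : G ⧸ H)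
    have hsum : ∑ x : G ⧸ H, w x = (Fintype.card (G ⧸ H) : ℂ) * w x₀ := by
      rw [Finset.sum_congr rfl (fun x _ => hconst x x₀)]
      simp [Finset.sum_const, mul_comm]
    have hcard : (Fintype.card (G ⧸ H) : ℂ) ≠ 0 := by
      exact_mod_cast Fintype.card_ne_zero
    have hw0 : w x₀ = 0 := by
      have := hsum ▸ hwV₀
      exact (mul_eq_zero.1 this).resolve_left hcard
    apply hwne
    funext x
    rw [hconst x x₀, hw0]
    rfl
  -- apply quasirandomness
  have hDle : D ≤ finrank ℂ W := hquasi W ρ' hirr hnt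
  have hle1 : finrank ℂ W ≤ finrank ℂ ((G ⧸ H) → ℂ) := Submodule.finrank_le W
  have hle2 : finrank ℂ ((G ⧸ H) → ℂ) = Fintype.card (G ⧸ H) := Module.finrank_pi ℂ
  have hindex : Fintype.card (G ⧸ H) = H.index := by
    rw [Subgroup.index, Nat.card_eq_fintype_card]
  have hDidx : D ≤ H.index := by omega
  have hkey : Nat.card H * D ≤ Nat.card G := by
    calc Nat.card H * D ≤ Nat.card H * H.index := Nat.mul_le_mul_left _ hDidx
    _ = Nat.card G := H.card_mul_index
  rw [le_div_iff₀ (by exact_mod_cast hD)]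
  exact_mod_cast hkey
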